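/- Multivariate reduction lemma: let f : ℂ^M → ℂ be an entire (analytic) function such that for every coordinate m and every fixed z^(m) of the remaining variables, the univariate entire function w ↦ f(w, z^(m)) satisfies the Gauss-Lucas relation, i.e., its critical points lie in the closure of the convex hull of its zeros. Then every zero of any partial derivative ∂f/∂z_m lies in the closure of the separately convex hull of the zero set of f. -/

import Mathlib

open Filter

def SeparatelyConvex {M : ℕ} (K : Set (Fin M → ℂ)) : Prop :=
  ∀ (m : Fin M) (z : Fin M → ℂ), Convex ℝ {w : ℂ | Function.update z m w ∈ K}

def sepConvexHull {M : ℕ} (A : Set (Fin M → ℂ)) : Set (Fin M → ℂ) :=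
  ⋂₀ {K : Set (Fin M → ℂ) | SeparatelyConvex K ∧ A ⊆ K}

/-- Partial derivative of `f` in the `m`-th coordinate at `z`. -/
noncomputable def pd {M : ℕ} (f : (Fin M → ℂ) → ℂ) (m : Fin M) (z : Fin M → ℂ) : ℂ :=
  deriv (fun w => f (Function.update z m w)) (z m)

theorem multivariate_reduction {M : ℕ} (f : (Fin M → ℂ) → ℂ)
    (hf : ∀ z, AnalyticAt ℂ f z)
    (hGL : ∀ (m : Fin M) (z : Fin M → ℂ) (w : ℂ),
      deriv (fun u => f (Function.update z m u)) w = 0 →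
      w ∈ closure (convexHull ℝ {u : ℂ | f (Function.update z m u) = 0}))
    (m : Fin M) (z : Fin M → ℂ) (hz : pd f m z = 0) :
    z ∈ closure (sepConvexHull (f ⁻¹' {0})) := by
  have hmem := hGL m z (z m) hz
  have hsep : SeparatelyConvex (sepConvexHull (f ⁻¹' {0})) := by
    intro m' z'
    have heq : {w : ℂ | Function.update z' m' w ∈ sepConvexHull (f ⁻¹' {0})}
        = ⋂ K ∈ {K : Set (Fin M → ℂ) | SeparatelyConvex K ∧ f ⁻¹' {0} ⊆ K},
            {w : ℂ | Function.update z' m' w ∈ K} := by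
      ext w; simp [sepConvexHull]
    rw [heq]
    exact convex_iInter fun K => convex_iInter fun hK => hK.1 m' z'
  have hsub : f ⁻¹' {0} ⊆ sepConvexHull (f ⁻¹' {0}) := fun x hx K hK => hK.2 hx
  have hSsub : convexHull ℝ {u : ℂ | f (Function.update z m u) = 0} ⊆
      {w : ℂ | Function.update z m w ∈ sepConvexHull (f ⁻¹' {0})} :=
    convexHull_min (fun u hu => hsub hu) (hsep m z)
  have hcont : Continuous fun w : ℂ => Function.update z m w := by
    apply continuous_pi
    intro i
    by_cases h : i = m
    · subst h; simpa using continuous_id'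
    · simp only [Function.update_of_ne h]; exact continuous_const
  have hx : Function.update z m (z m) ∈ closure (sepConvexHull (f ⁻¹' {0})) :=
    map_mem_closure hcont hmem hSsub
  simpa [Function.update_eq_self] using hx
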